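/- Let G = (V,E) be a finite simple graph, W ⊆ V a subset of vertices, and u ∈ W a vertex such that every edge of G with one endpoint in W and the other in V∖W is incident to u. Then the reduced density operator Tr_{V∖W} ( |G⟩⟨G| ) on ⨂_{w∈W} ℂ² has rank at most 2; its support is contained in the two-dimensional span of |0⟩^{(u)} ⊗ |G[W∖{u}]⟩ and |1⟩^{(u)} ⊗ (⨂_{b∈N_u∩W} Z^{(b)}) |G[W∖{u}]⟩, where G[W∖{u}] is the induced subgraph of G on W∖{u}. -/

import Mathlib

open scoped BigOperators

noncomputable section

/-- The state space of a collection of qubits indexed by `V`: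
amplitudes on computational-basis configurations `V → Bool`. -/
abbrev QState (V : Type*) := (V → Bool) → ℂ

variable {V : Type*}

/-- The inner product `⟨ψ|φ⟩`. -/
def qInner [Fintype V] [DecidableEq V] (ψ φ : QState V) : ℂ :=
  ∑ x, starRingEnd ℂ (ψ x) * φ x

/-- Pauli `X` acting on qubit `a`. -/
def pauliX [DecidableEq V] (a : V) (ψ : QState V) : QState V :=
  fun x => ψ (Function.update x a (!x a))

/-- Pauli `Z` acting on qubit `a`. -/
def pauliZ (a : V) (ψ : QState V) : QState V :=
  fun x => (if x a then (-1 : ℂ) else 1) * ψ x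

/-- Pauli `Y` acting on qubit `a`. -/
def pauliY [DecidableEq V] (a : V) (ψ : QState V) : QState V :=
  fun x => (if x a then Complex.I else -Complex.I) * ψ (Function.update x a (!x a))

/-- The tensor product `⨂_{b ∈ s} Z^{(b)}` of Pauli `Z` over the qubits in `s`. -/
def pauliZProd (s : Finset V) (ψ : QState V) : QState V :=
  fun x => (∏ b ∈ s, if x b then (-1 : ℂ) else 1) * ψ x

/-- A tensor product over the qubits in `s` of the diagonal single-qubit gate
`diag (f false, f true)`. -/
def diagProd (s : Finset V) (f : Bool → ℂ) (ψ : QState V) : QState V :=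
  fun x => (∏ b ∈ s, f (x b)) * ψ x

/-- The sign `(-1)^{x u · x v}` contributed by an edge `{u, v}`. -/
def edgeSign (x : V → Bool) : Sym2 V → ℂ :=
  Sym2.lift ⟨fun a b => if x a && x b then (-1 : ℂ) else 1,
    fun a b => by simp [Bool.and_comm]⟩

/-- The graph state `|G⟩ = (∏_{{u,v}∈E} CZ^{(uv)}) ⨂_v |+⟩^{(v)}` of a finite simple graph,
written out in amplitudes. -/
def graphState [Fintype V] [DecidableEq V] (G : SimpleGraph V) [DecidableRel G.Adj] :
    QState V :=
  fun x => ((Real.sqrt 2 : ℝ) : ℂ)⁻¹ ^ (Fintype.card V) * ∏ e ∈ G.edgeFinset, edgeSign x e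

/-- Local complementation `τ_a(G)` of a graph `G` at the vertex `a`: complement the
adjacency among the neighbors of `a`, leaving all other adjacencies unchanged. -/
def localComp (G : SimpleGraph V) (a : V) : SimpleGraph V where
  Adj u v :=
    (G.Adj a u ∧ G.Adj a v ∧ u ≠ v ∧ ¬ G.Adj u v) ∨
      ((¬ (G.Adj a u ∧ G.Adj a v)) ∧ G.Adj u v)
  symm := by
    constructor
    intro u v h
    rcases h with ⟨h1, h2, h3, h4⟩ | ⟨h1, h2⟩
    · exact Or.inl ⟨h2, h1, h3.symm, fun h => h4 (G.adj_symm h)⟩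
    · exact Or.inr ⟨fun h => h1 ⟨h.2, h.1⟩, G.adj_symm h2⟩
  loopless := by
    constructor
    intro u h
    rcases h with ⟨_, _, h3, _⟩ | ⟨_, h2⟩
    · exact h3 rfl
    · exact G.irrefl h2

instance [DecidableEq V] (G : SimpleGraph V) [DecidableRel G.Adj] (a : V) :
    DecidableRel (localComp G a).Adj := fun u v =>
  inferInstanceAs (Decidable
    ((G.Adj a u ∧ G.Adj a v ∧ u ≠ v ∧ ¬ G.Adj u v) ∨
      ((¬ (G.Adj a u ∧ G.Adj a v)) ∧ G.Adj u v)))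

/-- The induced subgraph of `G` on the vertices satisfying `P`. -/
def inducedSub (G : SimpleGraph V) (P : V → Prop) : SimpleGraph {v : V // P v} :=
  SimpleGraph.comap Subtype.val G

instance (G : SimpleGraph V) [DecidableRel G.Adj] (P : V → Prop) :
    DecidableRel (inducedSub G P).Adj := fun u v =>
  inferInstanceAs (Decidable (G.Adj u.1 v.1))

/-- The eigenvectors `|Z,+⟩ = |0⟩`, `|Z,-⟩ = |1⟩` of Pauli `Z`
(`s = false` the `+1`-eigenvector, `s = true` the `-1`-eigenvector). -/
def zVec (s : Bool) : Bool → ℂ := fun c => if c = s then 1 else 0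

/-- The eigenvectors `|X,±⟩ = (|0⟩ ± |1⟩)/√2` of Pauli `X`
(`s = false` the `+1`-eigenvector, `s = true` the `-1`-eigenvector). -/
def xVec (s : Bool) : Bool → ℂ :=
  fun c => ((Real.sqrt 2 : ℝ) : ℂ)⁻¹ * (if c && s then -1 else 1)

/-- The eigenvectors `|Y,±⟩ = (|0⟩ ± i|1⟩)/√2` of Pauli `Y`
(`s = false` the `+1`-eigenvector, `s = true` the `-1`-eigenvector). -/
def yVec (s : Bool) : Bool → ℂ :=
  fun c => ((Real.sqrt 2 : ℝ) : ℂ)⁻¹ *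
    (if c then (if s then -Complex.I else Complex.I) else 1)

/-- The rank-one projector `|v⟩⟨v|` on qubit `a` (identity elsewhere),
for a single-qubit vector `v`. -/
def projDir [DecidableEq V] (a : V) (v : Bool → ℂ) (ψ : QState V) : QState V :=
  fun x => v (x a) *
    (starRingEnd ℂ (v false) * ψ (Function.update x a false) +
      starRingEnd ℂ (v true) * ψ (Function.update x a true))

/-- The tensor product `|v⟩^{(a)} ⊗ |φ⟩` of a single-qubit state on qubit `a` with a state
on the remaining qubits. -/
def tensorQubit [DecidableEq V] (a : V) (v : Bool → ℂ) (φ : QState {u : V // u ≠ a}) :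
    QState V :=
  fun x => v (x a) * φ (fun u => x u.1)

/-- Apply a single-qubit gate with matrix entries `m r c = ⟨r|M|c⟩` on qubit `a`. -/
def applyGate [DecidableEq V] (a : V) (m : Bool → Bool → ℂ) (ψ : QState V) : QState V :=
  fun x => m (x a) false * ψ (Function.update x a false) +
    m (x a) true * ψ (Function.update x a true)

/-- The square roots `√(±iY) = (I ± iY)/√2`
(`s = false` for `√(+iY)`, `s = true` for `√(-iY)`). -/
def sqrtiY (s : Bool) : Bool → Bool → ℂ :=
  fun r c => ((Real.sqrt 2 : ℝ) : ℂ)⁻¹ *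
    (if s then (if r = false ∧ c = true then -1 else 1)
     else (if r = true ∧ c = false then -1 else 1))

/-- The Hadamard gate. -/
def hadamard : Bool → Bool → ℂ :=
  fun r c => ((Real.sqrt 2 : ℝ) : ℂ)⁻¹ * (if r && c then -1 else 1)

/-- Apply a tensor product of single-qubit gates, one on each qubit. -/
def applyLocal [Fintype V] [DecidableEq V] (u : V → Bool → Bool → ℂ) (ψ : QState V) :
    QState V :=
  fun x => ∑ y : V → Bool, (∏ v, u v (x v) (y v)) * ψ y

/-- `2×2` matrix multiplication (matrices as `Bool → Bool → ℂ`). -/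
def matMul2 (a b : Bool → Bool → ℂ) : Bool → Bool → ℂ :=
  fun r c => ∑ k : Bool, a r k * b k c

/-- Adjoint of a `2×2` matrix. -/
def matAdj2 (a : Bool → Bool → ℂ) : Bool → Bool → ℂ := fun r c => starRingEnd ℂ (a c r)

def idMat : Bool → Bool → ℂ := fun r c => if r = c then 1 else 0
def xMat : Bool → Bool → ℂ := fun r c => if r = c then 0 else 1
def yMat : Bool → Bool → ℂ := fun r c => if r = c then 0 else if r then Complex.I else -Complex.I
def zMat : Bool → Bool → ℂ := fun r c => if r = c then (if r then -1 else 1) else 0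

/-- A `2×2` matrix is unitary. -/
def IsUnitary2 (u : Bool → Bool → ℂ) : Prop := matMul2 (matAdj2 u) u = idMat

/-- A single-qubit Clifford unitary: a unitary conjugating `X` and `Z` into
`i^k·P` with `P` a Pauli matrix. -/
def IsClifford1 (u : Bool → Bool → ℂ) : Prop :=
  IsUnitary2 u ∧
    (∃ (k : ℕ) (P : Bool → Bool → ℂ), P ∈ ({idMat, xMat, yMat, zMat} : Set _) ∧
      matMul2 (matMul2 u xMat) (matAdj2 u) = Complex.I ^ k • P) ∧
    (∃ (k : ℕ) (P : Bool → Bool → ℂ), P ∈ ({idMat, xMat, yMat, zMat} : Set _) ∧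
      matMul2 (matMul2 u zMat) (matAdj2 u) = Complex.I ^ k • P)

/-- The action of the `n`-qubit Pauli operator `c · ⨂_v X^{xv v} Z^{zv v}`. -/
def pauliAction [Fintype V] (c : ℂ) (xv zv : V → Bool) (ψ : QState V) : QState V :=
  fun s => c * (∏ v, if zv v && (xor (s v) (xv v)) then (-1 : ℂ) else 1) *
    ψ (fun v => xor (s v) (xv v))

/-- The outer product `|ψ⟩⟨φ|` as a matrix on configurations. -/
def outer (ψ φ : QState V) : (V → Bool) → (V → Bool) → ℂ :=
  fun x y => ψ x * starRingEnd ℂ (φ y)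

open Classical in
/-- Partial trace keeping the qubits that satisfy `P` (tracing out the others). -/
def ptraceKeep [Fintype V] [DecidableEq V] (P : V → Prop)
    (ρ : (V → Bool) → (V → Bool) → ℂ) :
    ({v : V // P v} → Bool) → ({v : V // P v} → Bool) → ℂ :=
  fun x y => ∑ z : {v : V // ¬ P v} → Bool,
    ρ (fun w => if h : P w then x ⟨w, h⟩ else z ⟨w, h⟩)
      (fun w => if h : P w then y ⟨w, h⟩ else z ⟨w, h⟩)

open Classical in
/-- Apply a product of single-qubit bras `⟨bra v|` to each qubit `v` satisfying `P`,
leaving a state on the remaining qubits. -/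
def applyBras [Fintype V] [DecidableEq V] (P : V → Prop) (bra : V → Bool → ℂ)
    (ψ : QState V) : QState {v : V // ¬ P v} :=
  fun x => ∑ z : {v : V // P v} → Bool,
    (∏ v : {v : V // P v}, bra v.1 (z v)) *
      ψ (fun w => if h : P w then z ⟨w, h⟩ else x ⟨w, h⟩)

/-- A density operator: hermitian, trace one, positive semidefinite. -/
def IsDensityOp {α : Type*} [Fintype α] [DecidableEq α]
    (ρ : (α → Bool) → (α → Bool) → ℂ) : Prop :=
  (∀ x y, starRingEnd ℂ (ρ y x) = ρ x y) ∧ (∑ x, ρ x x = 1) ∧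
    ∀ ψ : (α → Bool) → ℂ, ∃ r : ℝ, 0 ≤ r ∧
      (∑ x, ∑ y, starRingEnd ℂ (ψ x) * ρ x y * ψ y) = (r : ℂ)

open Classical in
/-- Separability of an operator on the qubits indexed by `α` with respect to the
bipartition `(A, Aᶜ)`: a finite convex combination of tensor products of density
operators. -/
def SeparableWrt {α : Type*} [Fintype α] [DecidableEq α] (A : Set α)
    (ρ : (α → Bool) → (α → Bool) → ℂ) : Prop :=
  ∃ (k : ℕ) (p : Fin k → ℝ)
    (σ : Fin k → ({a : α // a ∈ A} → Bool) → ({a : α // a ∈ A} → Bool) → ℂ)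
    (τ : Fin k → ({a : α // a ∉ A} → Bool) → ({a : α // a ∉ A} → Bool) → ℂ),
    (∀ i, 0 ≤ p i) ∧ (∑ i, p i = 1) ∧
    (∀ i, IsDensityOp (σ i)) ∧ (∀ i, IsDensityOp (τ i)) ∧
    ∀ x y, ρ x y = ∑ i, (p i : ℂ) *
      (σ i (fun a => x a.1) (fun a => y a.1) * τ i (fun a => x a.1) (fun a => y a.1))


instance {α : Type*} [DecidableEq α] (r : α → α → Prop) [DecidableRel r] :
    DecidableRel (SimpleGraph.fromRel r).Adj := fun a b =>
  inferInstanceAs (Decidable (a ≠ b ∧ (r a b ∨ r b a)))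

/-- The line graph on `{1, …, n}` (as `Fin n`) with edges between consecutive vertices. -/
def lineGraph (n : ℕ) : SimpleGraph (Fin n) :=
  SimpleGraph.fromRel (fun i j => (i : ℕ) + 1 = (j : ℕ))

instance (n : ℕ) : DecidableRel (lineGraph n).Adj := fun a b =>
  inferInstanceAs (Decidable (a ≠ b ∧ ((a : ℕ) + 1 = (b : ℕ) ∨ (b : ℕ) + 1 = (a : ℕ))))

/-- The extension `I_R ⊗ s` of an operator `s` on `n` qubits by the identity on an extra
reference qubit labelled `0`. -/
def liftOp {n : ℕ} (s : QState (Fin n) → QState (Fin n)) (ψ : QState (Fin (n + 1))) :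
    QState (Fin (n + 1)) :=
  fun x => s (fun y => ψ (Fin.cons (x 0) y)) (fun k => x k.succ)

end

noncomputable section AuxStmt13
variable {α : Type*}

lemma edgeSign_mk' (s : α → Bool) (a b : α) :
    edgeSign s s(a, b) = if s a && s b then (-1 : ℂ) else 1 := rfl

lemma edgeSign_congr' {s t : α → Bool} (e : Sym2 α) (h : ∀ v ∈ e, s v = t v) :
    edgeSign s e = edgeSign t e := by
  induction e using Sym2.ind with
  | _ a b =>
    rw [edgeSign_mk', edgeSign_mk', h a (by simp), h b (by simp)]

lemma edgeSign_map' {β : Type*} (f : α → β) (s : β → Bool) (e : Sym2 α) :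
    edgeSign s (Sym2.map f e) = edgeSign (fun a => s (f a)) e := by
  induction e using Sym2.ind with
  | _ a b => rfl

open Classical in
lemma prod_edgeSign_induced [Fintype α] [DecidableEq α]
    (H : SimpleGraph α) [DecidableRel H.Adj] (P : α → Prop) [DecidablePred P] (s : α → Bool) :
    ∏ e ∈ (inducedSub H P).edgeFinset, edgeSign (fun t => s t.1) e
      = ∏ e ∈ H.edgeFinset.filter (fun e => ∀ v ∈ e, P v), edgeSign s e := by
  refine Finset.prod_bij (fun e _ => Sym2.map Subtype.val e) ?_ ?_ ?_ ?_
  · intro e he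
    revert he
    induction e using Sym2.ind with
    | _ a b =>
      intro he
      rw [SimpleGraph.mem_edgeFinset, SimpleGraph.mem_edgeSet] at he
      rw [Finset.mem_filter]
      constructor
      · show Sym2.map Subtype.val s(a, b) ∈ _
        rw [Sym2.map_pair_eq, SimpleGraph.mem_edgeFinset, SimpleGraph.mem_edgeSet]
        exact he
      · intro v hv
        replace hv : v ∈ Sym2.map Subtype.val s(a, b) := hv
        rw [Sym2.map_pair_eq, Sym2.mem_iff] at hv
        rcases hv with rfl | rfl
        · exact a.2
        · exact b.2
  · intro e₁ h₁ e₂ h₂ h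
    exact Sym2.map.injective Subtype.val_injective h
  · intro e he
    rw [Finset.mem_filter] at he
    revert he
    induction e using Sym2.ind with
    | _ a b =>
      intro he
      obtain ⟨hadj, hP⟩ := he
      rw [SimpleGraph.mem_edgeFinset, SimpleGraph.mem_edgeSet] at hadj
      refine ⟨s(⟨a, hP a (by simp)⟩, ⟨b, hP b (by simp)⟩), ?_,
        by show Sym2.map Subtype.val _ = _; rw [Sym2.map_pair_eq]⟩
      rw [SimpleGraph.mem_edgeFinset, SimpleGraph.mem_edgeSet]
      exact hadj
  · intro e _
    rw [edgeSign_map']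

open Classical in
lemma prod_edgeSign_split [Fintype α] [DecidableEq α]
    (H : SimpleGraph α) [DecidableRel H.Adj] (a : α) (s : α → Bool) :
    ∏ e ∈ H.edgeFinset, edgeSign s e
      = (∏ w ∈ Finset.univ.filter (fun w => H.Adj a w),
          (if s a && s w then (-1 : ℂ) else 1))
        * ∏ e ∈ H.edgeFinset.filter (fun e => ∀ v ∈ e, v ≠ a), edgeSign s e := by
  rw [← Finset.prod_filter_mul_prod_filter_not H.edgeFinset (fun e => a ∈ e)]
  congr 1
  · refine (Finset.prod_bij (fun w _ => s(a, w)) ?_ ?_ ?_ ?_).symm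
    · intro w hw
      rw [Finset.mem_filter] at hw
      rw [Finset.mem_filter, SimpleGraph.mem_edgeFinset, SimpleGraph.mem_edgeSet]
      exact ⟨hw.2, by simp⟩
    · intro w₁ h₁ w₂ h₂ h
      rw [Finset.mem_filter] at h₁
      rcases Sym2.eq_iff.mp h with ⟨_, h⟩ | ⟨h1, h2⟩
      · exact h
      · exact absurd (h2 ▸ h₁.2) H.irrefl
    · intro e he
      rw [Finset.mem_filter] at he
      revert he
      induction e using Sym2.ind with
      | _ x y =>
        intro he
        obtain ⟨hef, hae⟩ := he
        rw [SimpleGraph.mem_edgeFinset, SimpleGraph.mem_edgeSet] at hef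
        rcases Sym2.mem_iff.mp hae with rfl | rfl
        · exact ⟨y, Finset.mem_filter.mpr ⟨Finset.mem_univ _, hef⟩, rfl⟩
        · exact ⟨x, Finset.mem_filter.mpr ⟨Finset.mem_univ _, hef.symm⟩,
            Sym2.eq_swap⟩
    · intro w _
      rw [edgeSign_mk']
  · refine Finset.prod_congr (Finset.filter_congr ?_) (fun _ _ => rfl)
    intro e _
    constructor
    · intro h v hv hva
      exact h (hva ▸ hv)
    · intro h ha
      exact h a ha rfl

end AuxStmt13
set_option maxHeartbeats 1000000 in

open Classical in
lemma masterDecomp {V : Type*} [Fintype V] [DecidableEq V]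
    (G : SimpleGraph V) [DecidableRel G.Adj] (W : Set V) (u : V) (hu : u ∈ W)
    (hcut : ∀ x y : V, G.Adj x y → x ∈ W → y ∉ W → x = u)
    (x : {v : V // v ∈ W} → Bool) (z : {v : V // ¬ v ∈ W} → Bool) :
    graphState G (fun w => if h : w ∈ W then x ⟨w, h⟩ else z ⟨w, h⟩)
      = (((Real.sqrt 2 : ℝ) : ℂ)⁻¹ ^ (Fintype.card V)
          * ((∏ w ∈ Finset.univ.filter (fun w : {v : V // v ∈ W} => G.Adj u w.1),
                (if x ⟨u, hu⟩ && x w then (-1 : ℂ) else 1))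
             * ∏ e ∈ (inducedSub (inducedSub G (· ∈ W))
                  (· ≠ (⟨u, hu⟩ : {v : V // v ∈ W}))).edgeFinset,
                 edgeSign (fun t => x t.1) e))
        * ∏ e ∈ G.edgeFinset.filter (fun e => ¬ ∀ v ∈ e, v ∈ W),
            edgeSign (fun w => if h : w ∈ W
              then (if (⟨w, h⟩ : {v : V // v ∈ W}) = ⟨u, hu⟩ then x ⟨u, hu⟩ else false)
              else z ⟨w, h⟩) e := by
  set m : V → Bool := fun w => if h : w ∈ W then x ⟨w, h⟩ else z ⟨w, h⟩ with hm
  rw [graphState]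
  rw [← Finset.prod_filter_mul_prod_filter_not G.edgeFinset (fun e => ∀ v ∈ e, v ∈ W)]
  rw [← mul_assoc]
  congr 1
  · -- inside-W part
    congr 1
    have h1 : ∏ e ∈ G.edgeFinset.filter (fun e => ∀ v ∈ e, v ∈ W), edgeSign m e
        = ∏ e ∈ (inducedSub G (· ∈ W)).edgeFinset, edgeSign x e := by
      rw [← prod_edgeSign_induced G (· ∈ W) m]
      refine Finset.prod_congr rfl fun e _ => ?_
      refine edgeSign_congr' e fun t _ => ?_
      show m t.1 = x t
      rw [hm]
      simp only [t.2, dif_pos, Subtype.coe_eta]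
    rw [h1, prod_edgeSign_split (inducedSub G (· ∈ W)) (⟨u, hu⟩ : {v : V // v ∈ W}) x]
    congr 1
    · exact (prod_edgeSign_induced _ _ _).symm
  · -- outside part
    refine Finset.prod_congr rfl fun e he => ?_
    rw [Finset.mem_filter] at he
    revert he
    induction e using Sym2.ind with
    | _ a b =>
      intro he
      obtain ⟨hef, hout⟩ := he
      rw [SimpleGraph.mem_edgeFinset, SimpleGraph.mem_edgeSet] at hef
      refine edgeSign_congr' _ fun v hv => ?_
      by_cases hvW : v ∈ W
      · have hvu : v = u := by
          rcases Sym2.mem_iff.mp hv with rfl | rfl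
          · by_cases hbW : b ∈ W
            · exact absurd (fun w hw => by
                rcases Sym2.mem_iff.mp hw with rfl | rfl
                exacts [hvW, hbW]) hout
            · exact hcut v b hef hvW hbW
          · by_cases haW : a ∈ W
            · exact absurd (fun w hw => by
                rcases Sym2.mem_iff.mp hw with rfl | rfl
                exacts [haW, hvW]) hout
            · exact hcut v a hef.symm hvW haW
        subst hvu
        show m v = _
        rw [hm]
        simp only [dif_pos hvW, if_pos rfl]
        congr 1
      · show m v = _
        rw [hm]
        simp only [dif_neg hvW]

set_option maxHeartbeats 1000000


open Classical in
/-- If every edge of `G` from `W` to its complement is incident to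
`u ∈ W`, then the reduced state `Tr_{V∖W}(|G⟩⟨G|)` has rank at most 2: its range is
contained in the span of `|0⟩^{(u)} ⊗ |G[W∖{u}]⟩` and
`|1⟩^{(u)} ⊗ (⨂_{b∈N_u∩W} Z^{(b)}) |G[W∖{u}]⟩`. -/
theorem stmt13 {V : Type*} [Fintype V] [DecidableEq V]
    (G : SimpleGraph V) [DecidableRel G.Adj] (W : Set V) (u : V) (hu : u ∈ W)
    (hcut : ∀ x y : V, G.Adj x y → x ∈ W → y ∉ W → x = u) :
    ∀ φ : QState {v : V // v ∈ W},
      (fun x => ∑ y, ptraceKeep (· ∈ W) (outer (graphState G) (graphState G)) x y * φ y)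
        ∈ Submodule.span ℂ
          ({tensorQubit (⟨u, hu⟩ : {v : V // v ∈ W}) (zVec false)
              (graphState (inducedSub (inducedSub G (· ∈ W)) (· ≠ ⟨u, hu⟩))),
            tensorQubit (⟨u, hu⟩ : {v : V // v ∈ W}) (zVec true)
              (pauliZProd
                (Finset.univ.filter
                  (fun w : {t : {v : V // v ∈ W} // t ≠ ⟨u, hu⟩} => G.Adj u w.1.1))
                (graphState (inducedSub (inducedSub G (· ∈ W)) (· ≠ ⟨u, hu⟩))))} :
            Set (QState {v : V // v ∈ W})) := by
  intro φ
  classical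
  rw [Submodule.mem_span_pair]
  have hs2 : ((Real.sqrt 2 : ℝ) : ℂ) ≠ 0 :=
    Complex.ofReal_ne_zero.mpr (ne_of_gt (Real.sqrt_pos.mpr (by norm_num)))
  set c : ℂ := ((Real.sqrt 2 : ℝ) : ℂ)⁻¹ with hc
  have hc0 : c ≠ 0 := inv_ne_zero hs2
  set u' : {v : V // v ∈ W} := ⟨u, hu⟩ with hu'
  set A : ({v : V // v ∈ W} → Bool) → ℂ := fun x =>
    (∏ w ∈ Finset.univ.filter (fun w : {v : V // v ∈ W} => G.Adj u w.1),
        (if x u' && x w then (-1 : ℂ) else 1))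
      * ∏ e ∈ (inducedSub (inducedSub G (· ∈ W)) (· ≠ u')).edgeFinset,
          edgeSign (fun t => x t.1) e with hA
  set T : Bool → ({v : V // ¬ v ∈ W} → Bool) → ℂ := fun b z =>
    ∏ e ∈ G.edgeFinset.filter (fun e => ¬ ∀ v ∈ e, v ∈ W),
      edgeSign (fun w => if h : w ∈ W
        then (if (⟨w, h⟩ : {v : V // v ∈ W}) = u' then b else false)
        else z ⟨w, h⟩) e with hT
  set D : Bool → ℂ := fun b => ∑ z : {v : V // ¬ v ∈ W} → Bool,
    T b z * ∑ y : {v : V // v ∈ W} → Bool,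
      starRingEnd ℂ (graphState G (fun w => if h : w ∈ W then y ⟨w, h⟩ else z ⟨w, h⟩)) * φ y
    with hD
  have hmaster : ∀ (x : {v : V // v ∈ W} → Bool) (z : {v : V // ¬ v ∈ W} → Bool),
      graphState G (fun w => if h : w ∈ W then x ⟨w, h⟩ else z ⟨w, h⟩)
        = (c ^ Fintype.card V * A x) * T (x u') z :=
    fun x z => masterDecomp G W u hu hcut x z
  have hF : ∀ x : {v : V // v ∈ W} → Bool,
      (∑ y, ptraceKeep (· ∈ W) (outer (graphState G) (graphState G)) x y * φ y)
        = (c ^ Fintype.card V * A x) * D (x u') := by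
    intro x
    have step1 : ∀ y, ptraceKeep (· ∈ W) (outer (graphState G) (graphState G)) x y
        = ∑ z : {v : V // ¬ v ∈ W} → Bool, (c ^ Fintype.card V * A x)
            * (T (x u') z * starRingEnd ℂ
                (graphState G (fun w => if h : w ∈ W then y ⟨w, h⟩ else z ⟨w, h⟩))) := by
      intro y
      simp only [ptraceKeep, outer]
      refine Finset.sum_congr rfl fun z _ => ?_
      rw [hmaster x z]
      ring
    calc (∑ y, ptraceKeep (· ∈ W) (outer (graphState G) (graphState G)) x y * φ y)
        = ∑ y : {v : V // v ∈ W} → Bool, ∑ z : {v : V // ¬ v ∈ W} → Bool,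
            (c ^ Fintype.card V * A x) * (T (x u') z
              * (starRingEnd ℂ (graphState G
                  (fun w => if h : w ∈ W then y ⟨w, h⟩ else z ⟨w, h⟩)) * φ y)) := by
          refine Finset.sum_congr rfl fun y _ => ?_
          rw [step1 y, Finset.sum_mul]
          exact Finset.sum_congr rfl fun z _ => by ring
      _ = ∑ z : {v : V // ¬ v ∈ W} → Bool, ∑ y : {v : V // v ∈ W} → Bool,
            (c ^ Fintype.card V * A x) * (T (x u') z
              * (starRingEnd ℂ (graphState G
                  (fun w => if h : w ∈ W then y ⟨w, h⟩ else z ⟨w, h⟩)) * φ y)) :=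
          Finset.sum_comm
      _ = (c ^ Fintype.card V * A x) * D (x u') := by
          simp only [hD, Finset.mul_sum]
  refine ⟨(c ^ Fintype.card {t : {v : V // v ∈ W} // t ≠ u'})⁻¹
            * (c ^ Fintype.card V * D false),
          (c ^ Fintype.card {t : {v : V // v ∈ W} // t ≠ u'})⁻¹
            * (c ^ Fintype.card V * D true), ?_⟩
  have hFfun : (fun x => ∑ y, ptraceKeep (· ∈ W)
        (outer (graphState G) (graphState G)) x y * φ y)
      = fun x : {v : V // v ∈ W} → Bool => (c ^ Fintype.card V * A x) * D (x u') :=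
    funext hF
  rw [hFfun]
  have hcm : (c ^ Fintype.card {t : {v : V // v ∈ W} // t ≠ u'}) ≠ 0 :=
    pow_ne_zero _ hc0
  have hbridge : ∀ x : {v : V // v ∈ W} → Bool,
      ∏ t ∈ Finset.univ.filter (fun w : {t : {v : V // v ∈ W} // t ≠ u'} => G.Adj u w.1.1),
        (if x t.1 then (-1 : ℂ) else 1)
      = ∏ w ∈ Finset.univ.filter (fun w : {v : V // v ∈ W} => G.Adj u w.1),
        (if x w then (-1 : ℂ) else 1) := by
    intro x
    refine Finset.prod_bij (fun t _ => t.1) ?_ ?_ ?_ ?_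
    · intro t ht
      rw [Finset.mem_filter] at ht
      exact Finset.mem_filter.mpr ⟨Finset.mem_univ _, ht.2⟩
    · intro t1 _ t2 _ h
      exact Subtype.ext h
    · intro w hw
      rw [Finset.mem_filter] at hw
      have hne : w ≠ u' := by
        intro h
        subst h
        exact G.irrefl hw.2
      exact ⟨⟨w, hne⟩, Finset.mem_filter.mpr ⟨Finset.mem_univ _, hw.2⟩, rfl⟩
    · exact fun _ _ => rfl
  funext x
  simp only [Pi.add_apply, Pi.smul_apply, smul_eq_mul, tensorQubit, pauliZProd, zVec,
    graphState, hA]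
  simp only [← hc]
  cases hx : x u' with
  | false =>
    simp only [hx, Bool.false_and, if_neg (by simp : ¬ (false = true)), if_pos rfl,
      Bool.false_eq_true, if_false, Finset.prod_const_one, one_mul, mul_zero, zero_mul,
      add_zero, mul_one]
    field_simp
    simp only [↓reduceIte]
    ring
  | true =>
    simp only [hx, Bool.true_and, if_pos rfl, (by simp : (true = false) = False), if_false,
      one_mul, mul_zero, zero_mul, zero_add, mul_one]
    rw [hbridge x]
    field_simp
    simp only [↓reduceIte]
    ring
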